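/- The simple mean inequalities ((1+√x)/2)² ≤ (1+x)/2 ≤ 2((1+√x)/2)² hold for all x ≥ 0, and consequently for any positive definite diagonal density matrix D and self-adjoint A, the Wigner–Yanase skew information I^{WY}(D,A) = −(1/2) Tr [D^{1/2},A]² and the SLD skew information I^{SLD}(D,A) satisfy I^{WY}(D,A) ≤ I^{SLD}(D,A) ≤ 2 I^{WY}(D,A). -/

import Mathlib

open Matrix

lemma stmt19_key (a b : ℝ) (ha : 0 < a) (hb : 0 < b) :
    (1/2) * (Real.sqrt a - Real.sqrt b)^2 ≤ (1/4) * ((a-b)^2/(b*((1+a/b)/2)))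
    ∧ (1/4) * ((a-b)^2/(b*((1+a/b)/2))) ≤ (Real.sqrt a - Real.sqrt b)^2 := by
  have hden : b * ((1 + a / b) / 2) = (a + b) / 2 := by
    rw [mul_div_assoc']
    congr 1
    field_simp
    ring
  have h4 : (1/4 : ℝ) * ((a-b)^2/((a+b)/2)) = (a-b)^2/(2*(a+b)) := by
    have hab0 : a + b ≠ 0 := by positivity
    field_simp
    ring
  have hab : 0 < 2 * (a + b) := by linarith
  have hsa : Real.sqrt a ^ 2 = a := Real.sq_sqrt ha.le
  have hsb : Real.sqrt b ^ 2 = b := Real.sq_sqrt hb.le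
  have hsa0 := Real.sqrt_nonneg a
  have hsb0 := Real.sqrt_nonneg b
  rw [hden, h4]
  constructor
  · rw [le_div_iff₀ hab]
    nlinarith [mul_nonneg (sq_nonneg (Real.sqrt a - Real.sqrt b)) (mul_nonneg hsa0 hsb0)]
  · rw [div_le_iff₀ hab]
    nlinarith [mul_nonneg (sq_nonneg (Real.sqrt a - Real.sqrt b)) (mul_nonneg hsa0 hsb0),
      sq_nonneg (Real.sqrt a - Real.sqrt b), sq_nonneg (Real.sqrt a * Real.sqrt b)]

theorem stmt19 {n : ℕ} (lam : Fin n → ℝ) (hlam : ∀ i, 0 < lam i)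
    (hdensity : ∑ i, lam i = 1)
    (A : Matrix (Fin n) (Fin n) ℂ) (hA : A.IsHermitian)
    (Dsqrt : Matrix (Fin n) (Fin n) ℂ)
    (hDsqrt : Dsqrt = Matrix.diagonal fun i => ((Real.sqrt (lam i) : ℝ) : ℂ))
    (IWY ISLD : ℝ)
    (hIWY : IWY = (-(1 / 2 : ℂ) * ((Dsqrt * A - A * Dsqrt) * (Dsqrt * A - A * Dsqrt)).trace).re)
    (hISLD : ISLD = (1 / 2) / 2 *
      ∑ i, ∑ j, (lam i - lam j) ^ 2 / (lam j * ((1 + lam i / lam j) / 2)) * ‖A i j‖ ^ 2) :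
    (∀ x ≥ (0 : ℝ),
        ((1 + Real.sqrt x) / 2) ^ 2 ≤ (1 + x) / 2 ∧
        (1 + x) / 2 ≤ 2 * ((1 + Real.sqrt x) / 2) ^ 2)
    ∧ IWY ≤ ISLD ∧ ISLD ≤ 2 * IWY := by
  have part1 : ∀ x ≥ (0 : ℝ),
      ((1 + Real.sqrt x) / 2) ^ 2 ≤ (1 + x) / 2 ∧
      (1 + x) / 2 ≤ 2 * ((1 + Real.sqrt x) / 2) ^ 2 := by
    intro x hx
    have h1 := Real.sq_sqrt hx
    have h2 := Real.sqrt_nonneg x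
    constructor <;> nlinarith [sq_nonneg (1 - Real.sqrt x)]
  refine ⟨part1, ?_⟩
  set s : Fin n → ℝ := fun i => Real.sqrt (lam i) with hs
  have hAconj : ∀ i j : Fin n, A j i = (starRingEnd ℂ) (A i j) := by
    intro i j
    exact (hA.apply j i).symm
  have hM : ∀ i j, (Dsqrt * A - A * Dsqrt) i j = ((s i : ℂ) - s j) * A i j := by
    intro i j
    subst hDsqrt
    simp only [Matrix.sub_apply, Matrix.diagonal_mul, Matrix.mul_diagonal]
    ring
  have hT : ((Dsqrt * A - A * Dsqrt) * (Dsqrt * A - A * Dsqrt)).trace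
      = ((∑ i, ∑ j, -((s i - s j)^2 * ‖A i j‖^2) : ℝ) : ℂ) := by
    push_cast
    rw [Matrix.trace]
    simp only [Matrix.diag_apply, Matrix.mul_apply, hM]
    refine Finset.sum_congr rfl fun i _ => ?_
    refine Finset.sum_congr rfl fun j _ => ?_
    rw [hAconj i j]
    have hz : A i j * (starRingEnd ℂ) (A i j) = ((‖A i j‖^2 : ℝ) : ℂ) := by
      simp [Complex.mul_conj, Complex.normSq_eq_norm_sq]
    calc (((s i : ℂ) - ↑(s j)) * A i j) * (((s j : ℂ) - ↑(s i)) * (starRingEnd ℂ) (A i j))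
        = -(((s i : ℂ) - s j)^2 * (A i j * (starRingEnd ℂ) (A i j))) := by ring
      _ = -(((s i : ℂ) - ↑(s j))^2 * ↑‖A i j‖^2) := by rw [hz]; push_cast; ring
  have hIWY' : IWY = ∑ i, ∑ j, (1/2) * (s i - s j)^2 * ‖A i j‖^2 := by
    rw [hIWY, hT]
    have : (-(1/2 : ℂ)) = ((-(1/2) : ℝ) : ℂ) := by norm_num
    rw [this, ← Complex.ofReal_mul, Complex.ofReal_re]
    rw [Finset.mul_sum]
    refine Finset.sum_congr rfl fun i _ => ?_
    rw [Finset.mul_sum]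
    refine Finset.sum_congr rfl fun j _ => ?_
    ring
  have hISLD' : ISLD = ∑ i, ∑ j,
      (1/4) * ((lam i - lam j)^2 / (lam j * ((1 + lam i / lam j)/2)) * ‖A i j‖^2) := by
    rw [hISLD, Finset.mul_sum]
    refine Finset.sum_congr rfl fun i _ => ?_
    rw [Finset.mul_sum]
    refine Finset.sum_congr rfl fun j _ => ?_
    ring
  rw [hIWY', hISLD']
  have hterm := fun i j : Fin n => stmt19_key (lam i) (lam j) (hlam i) (hlam j)
  constructor
  · refine Finset.sum_le_sum fun i _ => Finset.sum_le_sum fun j _ => ?_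
    have h := (hterm i j).1
    have hn : (0:ℝ) ≤ ‖A i j‖^2 := sq_nonneg _
    calc (1/2) * (s i - s j)^2 * ‖A i j‖^2
        = ((1/2) * (Real.sqrt (lam i) - Real.sqrt (lam j))^2) * ‖A i j‖^2 := by rw [hs]
      _ ≤ ((1/4) * ((lam i - lam j)^2/(lam j * ((1+lam i/lam j)/2)))) * ‖A i j‖^2 :=
          mul_le_mul_of_nonneg_right h hn
      _ = (1/4) * ((lam i - lam j)^2 / (lam j * ((1 + lam i / lam j)/2)) * ‖A i j‖^2) := by ring
  · rw [Finset.mul_sum]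
    refine Finset.sum_le_sum fun i _ => ?_
    rw [Finset.mul_sum]
    refine Finset.sum_le_sum fun j _ => ?_
    have h := (hterm i j).2
    have hn : (0:ℝ) ≤ ‖A i j‖^2 := sq_nonneg _
    calc (1/4) * ((lam i - lam j)^2 / (lam j * ((1 + lam i / lam j)/2)) * ‖A i j‖^2)
        = ((1/4) * ((lam i - lam j)^2/(lam j * ((1+lam i/lam j)/2)))) * ‖A i j‖^2 := by ring
      _ ≤ ((Real.sqrt (lam i) - Real.sqrt (lam j))^2) * ‖A i j‖^2 :=
          mul_le_mul_of_nonneg_right h hn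
      _ = 2 * ((1/2) * (s i - s j)^2 * ‖A i j‖^2) := by rw [hs]; ring
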